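/- Let (V,φ) be a finite-dimensional bilinear space, G its isometry group, V_∞ and ⁿ∞V the canonical invariant subspaces with ⁿ∞V = L(V_∞). The map g ↦ φ_g, where φ_g(v,w) = φ((g−1)v, w), sends the pointwise stabilizer G[ⁿ∞V] into the space of bilinear forms on V whose radical contains ⁿ∞V; moreover φ_{gh} = φ_g + φ_h for g, h ∈ G[ⁿ∞V] (i.e. it is a group homomorphism into the additive group of such forms), and its kernel is G[ⁿ∞V] ∩ G[V / R(V) ∩ L(V)] (the elements g with (g−1)V contained in the radical of φ). -/
import Mathlib



variable {F V : Type*} [Field F] [AddCommGroup V] [Module F V]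

/-- Left orthogonal complement of a subspace with respect to a bilinear form. -/
def Lc (φ : V →ₗ[F] V →ₗ[F] F) (U : Submodule F V) : Submodule F V where
  carrier := {v | ∀ u ∈ U, φ v u = 0}
  add_mem' := by
    intro a b ha hb u hu
    simp [map_add, ha u hu, hb u hu]
  zero_mem' := by intro u hu; simp
  smul_mem' := by
    intro c a ha u hu
    simp [ha u hu]

/-- Right orthogonal complement of a subspace with respect to a bilinear form. -/
def Rc (φ : V →ₗ[F] V →ₗ[F] F) (U : Submodule F V) : Submodule F V where
  carrier := {v | ∀ u ∈ U, φ u v = 0}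
  add_mem' := by
    intro a b ha hb u hu
    simp [map_add, ha u hu, hb u hu]
  zero_mem' := by intro u hu; simp
  smul_mem' := by
    intro c a ha u hu
    simp [ha u hu]

/-- The odd alternating iterates `L^{2k+1}(V) = L(R(L(...(V))))`. -/
def Lodd (φ : V →ₗ[F] V →ₗ[F] F) : ℕ → Submodule F V
  | 0 => Lc φ ⊤
  | k + 1 => Lc φ (Rc φ (Lodd φ k))

/-- The odd alternating iterates `R^{2k+1}(V) = R(L(R(...(V))))`. -/
def Rodd (φ : V →ₗ[F] V →ₗ[F] F) : ℕ → Submodule F V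
  | 0 => Rc φ ⊤
  | k + 1 => Rc φ (Lc φ (Rodd φ k))

/-- `V_∞ = L_∞(V) + R_∞(V)`. -/
def Vinf (φ : V →ₗ[F] V →ₗ[F] F) : Submodule F V :=
  (⨆ k, Lodd φ k) ⊔ (⨆ k, Rodd φ k)

/-- `g` is an isometry of the bilinear space `(V, φ)`. -/
def IsIsom (φ : V →ₗ[F] V →ₗ[F] F) (g : V ≃ₗ[F] V) : Prop :=
  ∀ v w : V, φ (g v) (g w) = φ v w

lemma mem_Lc {φ : V →ₗ[F] V →ₗ[F] F} {U : Submodule F V} {v : V} :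
    v ∈ Lc φ U ↔ ∀ u ∈ U, φ v u = 0 := Iff.rfl

lemma mem_Rc {φ : V →ₗ[F] V →ₗ[F] F} {U : Submodule F V} {v : V} :
    v ∈ Rc φ U ↔ ∀ u ∈ U, φ u v = 0 := Iff.rfl

lemma Lodd_eq (φ : V →ₗ[F] V →ₗ[F] F) : ∀ k, Lodd φ k = Lc φ ⊤ := by
  intro k
  induction k with
  | zero => rfl
  | succ k ih =>
    show Lc φ (Rc φ (Lodd φ k)) = Lc φ ⊤
    rw [ih]
    have : Rc φ (Lc φ ⊤ : Submodule F V) = ⊤ := by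
      ext v
      simp only [Submodule.mem_top, iff_true, mem_Rc]
      intro u hu
      exact hu v trivial
    rw [this]

lemma Rodd_eq (φ : V →ₗ[F] V →ₗ[F] F) : ∀ k, Rodd φ k = Rc φ ⊤ := by
  intro k
  induction k with
  | zero => rfl
  | succ k ih =>
    show Rc φ (Lc φ (Rodd φ k)) = Rc φ ⊤
    rw [ih]
    have : Lc φ (Rc φ ⊤ : Submodule F V) = ⊤ := by
      ext v
      simp only [Submodule.mem_top, iff_true, mem_Lc]
      intro u hu
      exact hu v trivial
    rw [this]

lemma Vinf_eq (φ : V →ₗ[F] V →ₗ[F] F) : Vinf φ = Lc φ ⊤ ⊔ Rc φ ⊤ := by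
  unfold Vinf
  congr 1
  · apply le_antisymm
    · exact iSup_le fun k => (Lodd_eq φ k).le
    · exact le_iSup_of_le 0 (Lodd_eq φ 0).ge
  · apply le_antisymm
    · exact iSup_le fun k => (Rodd_eq φ k).le
    · exact le_iSup_of_le 0 (Rodd_eq φ 0).ge

-- left kernel sits inside Lc φ (Vinf φ)
lemma LK_le_W (φ : V →ₗ[F] V →ₗ[F] F) : Lc φ ⊤ ≤ Lc φ (Vinf φ) := by
  intro l hl u _
  exact hl u trivial

lemma symm_fix {φ : V →ₗ[F] V →ₗ[F] F} {g : V ≃ₗ[F] V}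
    (hfix : ∀ v ∈ Lc φ (Vinf φ), g v = v) :
    ∀ v ∈ Lc φ (Vinf φ), g.symm v = v := by
  intro v hv
  conv_lhs => rw [← hfix v hv]
  exact g.symm_apply_apply v

-- key lemma: (g - 1) V ⊆ Lc φ (Vinf φ)
lemma key (φ : V →ₗ[F] V →ₗ[F] F) (g : V ≃ₗ[F] V) (hg : IsIsom φ g)
    (hfix : ∀ v ∈ Lc φ (Vinf φ), g v = v) (v : V) :
    g v - v ∈ Lc φ (Vinf φ) := by
  intro u hu
  rw [Vinf_eq] at hu
  obtain ⟨l, hl, r, hr, rfl⟩ := Submodule.mem_sup.mp hu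
  have hr0 : ∀ x : V, φ x r = 0 := fun x => hr x trivial
  have hgl : g.symm l = l := symm_fix hfix l (LK_le_W φ hl)
  have h1 : φ (g v) l = φ v l := by
    have := hg v (g.symm l)
    rw [g.apply_symm_apply, hgl] at this
    exact this
  simp [map_add, map_sub, hr0, h1]

theorem form_map_on_stabilizer_of_upper_infinity
    [FiniteDimensional F V] (φ : V →ₗ[F] V →ₗ[F] F) :
    (∀ g : V ≃ₗ[F] V, IsIsom φ g → (∀ v ∈ Lc φ (Vinf φ), g v = v) →
      ∀ v : V, ∀ w ∈ Lc φ (Vinf φ),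
        φ (g v - v) w = 0 ∧ φ (g w - w) v = 0) ∧
    (∀ g h : V ≃ₗ[F] V, IsIsom φ g → (∀ v ∈ Lc φ (Vinf φ), g v = v) →
      IsIsom φ h → (∀ v ∈ Lc φ (Vinf φ), h v = v) →
      ∀ v w : V, φ (g (h v) - v) w = φ (g v - v) w + φ (h v - v) w) ∧
    (∀ g : V ≃ₗ[F] V, IsIsom φ g → (∀ v ∈ Lc φ (Vinf φ), g v = v) →
      ((∀ v w : V, φ (g v - v) w = 0) ↔
        ∀ v : V, (∀ w : V, φ (g v - v) w = 0) ∧ ∀ w : V, φ w (g v - v) = 0)) := by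
  refine ⟨?_, ?_, ?_⟩
  · -- part 1
    intro g hg hfix v w hw
    constructor
    · have h1 : φ (g v) w = φ v w := by
        have := hg v w
        rwa [hfix w hw] at this
      simp [map_sub, h1]
    · rw [hfix w hw]
      simp
  · -- part 2
    intro g h hg hgfix hh hhfix v w
    have hx : h v - v ∈ Lc φ (Vinf φ) := key φ h hh hhfix v
    have hghv : g (h v) = g v + (h v - v) := by
      have : h v = v + (h v - v) := by abel
      rw [this, map_add, hgfix _ hx]; abel
    rw [hghv]
    have : g v + (h v - v) - v = (g v - v) + (h v - v) := by abel
    rw [this, map_add]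
    simp
  · -- part 3
    intro g hg hfix
    constructor
    · intro H v
      refine ⟨H v, fun w => ?_⟩
      have h1 : φ w (g v) = φ (g.symm w) v := by
        have := hg (g.symm w) v
        rwa [g.apply_symm_apply] at this
      have h2 : φ (g (g.symm w) - g.symm w) v = 0 := H (g.symm w) v
      rw [g.apply_symm_apply] at h2
      rw [map_sub] at h2
      simp only [LinearMap.sub_apply] at h2
      calc φ w (g v - v) = φ w (g v) - φ w v := by rw [map_sub]
        _ = φ (g.symm w) v - φ w v := by rw [h1]
        _ = 0 := by linear_combination -h2
    · intro H v w
      exact (H v).1 w
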